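/- The terminal space S(M) of a commutative monoid M is a T1-space if and only if no strongly irreducible ideal of M is properly contained in another strongly irreducible ideal; that is, if and only if for all I, J ∈ S(M), I ⊆ J implies I = J. -/
import Mathlib


/-- An ideal of a commutative monoid `M`: a subset closed under
multiplication by arbitrary elements of `M`. -/
def IsIdealM {M : Type*} [CommMonoid M] (I : Set M) : Prop :=
  ∀ x ∈ I, ∀ m : M, x * m ∈ I

/-- A strongly irreducible ideal: a proper ideal `I` such that for all ideals
`J`, `K`, if `J ∩ K ⊆ I` then `J ⊆ I` or `K ⊆ I`. -/
def IsStronglyIrr {M : Type*} [CommMonoid M] (I : Set M) : Prop :=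
  IsIdealM I ∧ I ≠ Set.univ ∧
    ∀ J K : Set M, IsIdealM J → IsIdealM K → J ∩ K ⊆ I → J ⊆ I ∨ K ⊆ I

/-- A prime ideal of a commutative monoid. -/
def IsPrimeIdealM {M : Type*} [CommMonoid M] (P : Set M) : Prop :=
  IsIdealM P ∧ P ≠ Set.univ ∧ ∀ x y : M, x * y ∈ P → x ∈ P ∨ y ∈ P

/-- A maximal ideal of a commutative monoid: a proper ideal maximal among
proper ideals. -/
def IsMaximalIdealM {M : Type*} [CommMonoid M] (I : Set M) : Prop :=
  IsIdealM I ∧ I ≠ Set.univ ∧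
    ∀ J : Set M, IsIdealM J → J ≠ Set.univ → I ⊆ J → J = I

/-- `SIr M` is the set (type) of strongly irreducible ideals of `M`. -/
structure SIr (M : Type*) [CommMonoid M] where
  carrier : Set M
  strongly_irr : IsStronglyIrr carrier

namespace SIr

variable {M : Type*} [CommMonoid M]

@[ext] theorem ext {I J : SIr M} (h : I.carrier = J.carrier) : I = J := by
  cases I; cases J; simpa using h

/-- `KK X = ⋂_{I ∈ X} I`, the kernel of a set of strongly irreducible ideals. -/
def KK (X : Set (SIr M)) : Set M := ⋂ I ∈ X, I.carrier

/-- The hull-kernel operator `HK`: for nonempty `X`,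
`HK X = {J ∈ S(M) : K(X) ⊆ J}`, and `HK ∅ = ∅`. -/
def HK (X : Set (SIr M)) : Set (SIr M) :=
  {J : SIr M | X.Nonempty ∧ KK X ⊆ J.carrier}

theorem HK_empty : HK (∅ : Set (SIr M)) = ∅ := by
  ext J
  simp [HK, Set.not_nonempty_empty]

theorem mem_HK_of_nonempty {X : Set (SIr M)} (hX : X.Nonempty) {J : SIr M} :
    J ∈ HK X ↔ KK X ⊆ J.carrier :=
  ⟨fun h => h.2, fun h => ⟨hX, h⟩⟩

theorem KK_antitone {X X' : Set (SIr M)} (h : X ⊆ X') : KK X' ⊆ KK X := by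
  intro m hm
  simp only [KK, Set.mem_iInter] at hm ⊢
  exact fun I hI => hm I (h hI)

theorem KK_isIdeal (X : Set (SIr M)) : IsIdealM (KK X) := by
  intro x hx m
  simp only [KK, Set.mem_iInter] at hx ⊢
  exact fun I hI => I.strongly_irr.1 x (hx I hI) m

theorem subset_HK (X : Set (SIr M)) : X ⊆ HK X := by
  intro J hJ
  refine ⟨⟨J, hJ⟩, fun m hm => ?_⟩
  simp only [KK, Set.mem_iInter] at hm
  exact hm J hJ

theorem HK_mono {X X' : Set (SIr M)} (h : X ⊆ X') : HK X ⊆ HK X' := by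
  rintro J ⟨hne, hsub⟩
  exact ⟨hne.mono h, (KK_antitone h).trans hsub⟩

theorem HK_idem (X : Set (SIr M)) : HK (HK X) = HK X := by
  refine Set.Subset.antisymm ?_ (subset_HK _)
  rintro J ⟨hne, hsub⟩
  obtain ⟨I, hI⟩ := hne
  refine ⟨hI.1, Set.Subset.trans ?_ hsub⟩
  intro m hm
  simp only [KK, Set.mem_iInter]
  exact fun L hL => hL.2 hm

theorem HK_union (X X' : Set (SIr M)) : HK (X ∪ X') = HK X ∪ HK X' := by
  rcases X.eq_empty_or_nonempty with rfl | hX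
  · rw [Set.empty_union, HK_empty, Set.empty_union]
  rcases X'.eq_empty_or_nonempty with rfl | hX'
  · rw [Set.union_empty, HK_empty, Set.union_empty]
  refine Set.Subset.antisymm ?_
    (Set.union_subset (HK_mono Set.subset_union_left)
      (HK_mono Set.subset_union_right))
  rintro J ⟨-, hsub⟩
  have hKK : KK X ∩ KK X' ⊆ J.carrier := by
    refine Set.Subset.trans ?_ hsub
    intro m hm
    simp only [KK, Set.mem_iInter, Set.mem_inter_iff] at hm ⊢
    rintro I (hI | hI)
    · exact hm.1 I hI
    · exact hm.2 I hI
  rcases J.strongly_irr.2.2 (KK X) (KK X') (KK_isIdeal X) (KK_isIdeal X') hKK with h | h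
  · exact Or.inl ⟨hX, h⟩
  · exact Or.inr ⟨hX', h⟩

/-- The terminal-space (Zariski) topology on `SIr M`: the closed sets are
exactly the sets of the form `HK X`. -/
instance instTopologicalSpace : TopologicalSpace (SIr M) :=
  TopologicalSpace.ofClosed (Set.range HK)
    ⟨∅, HK_empty⟩
    (fun A hA => by
      refine ⟨⋂₀ A, Set.Subset.antisymm (Set.subset_sInter fun C hC => ?_) (subset_HK _)⟩
      obtain ⟨Y, hY⟩ := hA hC
      calc HK (⋂₀ A) ⊆ HK C := HK_mono (Set.sInter_subset_of_mem hC)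
        _ = HK (HK Y) := by rw [hY]
        _ = HK Y := HK_idem Y
        _ = C := hY)
    (fun A hA B hB => by
      obtain ⟨Y, hY⟩ := hA
      obtain ⟨Z, hZ⟩ := hB
      exact ⟨Y ∪ Z, by rw [HK_union, hY, hZ]⟩)

theorem isClosed_iff {C : Set (SIr M)} : IsClosed C ↔ ∃ X, HK X = C := by
  rw [← isOpen_compl_iff]
  show Cᶜᶜ ∈ Set.range HK ↔ _
  rw [compl_compl]
  exact Iff.rfl

end SIr

theorem SIr.KK_singleton {M : Type*} [CommMonoid M] (I : SIr M) :
    SIr.KK {I} = I.carrier := by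
  simp [SIr.KK]

theorem SIr.HK_singleton {M : Type*} [CommMonoid M] (I : SIr M) :
    SIr.HK {I} = {J : SIr M | I.carrier ⊆ J.carrier} := by
  ext J
  simp [SIr.HK, SIr.KK_singleton]

/-- the terminal space is T1 iff no strongly irreducible ideal is
properly contained in another one. -/
theorem terminal_t1_iff (M : Type*) [CommMonoid M] :
    T1Space (SIr M) ↔ ∀ I J : SIr M, I.carrier ⊆ J.carrier → I = J := by
  constructor
  · intro h I J hIJ
    have hcl : IsClosed ({I} : Set (SIr M)) := isClosed_singleton
    obtain ⟨X, hX⟩ := SIr.isClosed_iff.mp hcl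
    have hI : I ∈ SIr.HK X := hX ▸ rfl
    have hJ : J ∈ SIr.HK X := ⟨hI.1, hI.2.trans hIJ⟩
    have : J ∈ ({I} : Set (SIr M)) := hX ▸ hJ
    exact (Set.mem_singleton_iff.mp this).symm
  · intro h
    refine ⟨fun I => SIr.isClosed_iff.mpr ⟨{I}, ?_⟩⟩
    rw [SIr.HK_singleton]
    ext J
    simp only [Set.mem_setOf_eq, Set.mem_singleton_iff]
    exact ⟨fun hIJ => (h I J hIJ).symm, fun e => e ▸ subset_rfl⟩
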